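/- Let 𝒯 = (T_t)_{t≥0} be a C₀-semigroup on a separable metrizable topological vector space X and let x ∈ X be a hypercyclic vector for 𝒯. Then for every nonempty open set U ⊆ X, the set J_U = {τ > 0 : ∃ n ∈ ℕ, T_{nτ} x ∈ U} is open and dense in (0, ∞). -/

import Mathlib

open Filter

lemma no_inj_disc {δ : ℝ} (hδ : 0 < δ) (G : ℂ → ℝ)
    (hc : ContinuousOn G (Metric.closedBall 0 δ))
    (hi : Set.InjOn G (Metric.closedBall 0 δ)) : False := by
  have hδ' : (δ : ℝ) ≠ 0 := hδ.ne'
  have hre' : ∀ a b : ℝ, ((a : ℂ) + (b : ℂ) * Complex.I).re = a := by intros; simp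
  have him' : ∀ a b : ℝ, ((a : ℂ) + (b : ℂ) * Complex.I).im = b := by intros; simp
  set c₂ : ℝ → ℂ := fun s => (s : ℂ) + ((δ - s ^ 2 / δ : ℝ) : ℂ) * Complex.I with hc₂
  have hcre : ∀ s : ℝ, (c₂ s).re = s := fun s => hre' s _
  have hcim : ∀ s : ℝ, (c₂ s).im = δ - s ^ 2 / δ := fun s => him' s _
  have hmem1 : ∀ s : ℝ, s ∈ Set.Icc (-δ) δ → (s : ℂ) ∈ Metric.closedBall (0:ℂ) δ := by
    intro s hs
    rw [Metric.mem_closedBall, dist_zero_right, Complex.norm_real, Real.norm_eq_abs, abs_le]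
    exact ⟨hs.1, hs.2⟩
  have hmem2 : ∀ s : ℝ, s ∈ Set.Icc (-δ) δ → c₂ s ∈ Metric.closedBall (0:ℂ) δ := by
    intro s hs
    rw [Metric.mem_closedBall, dist_zero_right]
    have hnormsq : ‖c₂ s‖ ^ 2 = s ^ 2 + (δ - s ^ 2 / δ) ^ 2 := by
      rw [Complex.sq_norm, Complex.normSq_apply, hcre, hcim]; ring
    have hs2 : s ^ 2 ≤ δ ^ 2 := by nlinarith [hs.1, hs.2]
    have hA : (δ - s ^ 2 / δ) * δ = δ ^ 2 - s ^ 2 := by field_simp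
    have h4 : s ^ 2 * s ^ 2 ≤ s ^ 2 * δ ^ 2 := mul_le_mul_of_nonneg_left hs2 (sq_nonneg s)
    have key : ‖c₂ s‖ ^ 2 ≤ δ ^ 2 := by
      rw [hnormsq]
      nlinarith [hA, hs2, h4, mul_pos hδ hδ]
    nlinarith [norm_nonneg (c₂ s)]
  have hc₂cont : Continuous c₂ := by fun_prop
  have h0 : δ - δ ^ 2 / δ = 0 := by field_simp; ring
  have h0' : δ - (-δ) ^ 2 / δ = 0 := by rw [show ((-δ : ℝ)) ^ 2 = δ ^ 2 by ring]; field_simp; ring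
  have hc₂δ : c₂ δ = ((δ : ℝ) : ℂ) := by simp only [hc₂]; rw [h0]; simp
  have hc₂negδ : c₂ (-δ) = ((-δ : ℝ) : ℂ) := by simp only [hc₂]; rw [h0']; simp
  set f : ℝ → ℝ := fun s => G (s : ℂ) with hf
  set g : ℝ → ℝ := fun s => G (c₂ s) with hg
  have hIcc : Set.uIcc (-δ) δ = Set.Icc (-δ) δ := Set.uIcc_of_le (by linarith)
  have hfc : ContinuousOn f (Set.uIcc (-δ) δ) := by
    rw [hIcc]
    exact hc.comp Complex.continuous_ofReal.continuousOn hmem1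
  have hgc : ContinuousOn g (Set.uIcc (-δ) δ) := by
    rw [hIcc]
    exact hc.comp hc₂cont.continuousOn hmem2
  have hne : f (-δ) ≠ f δ := by
    intro h
    have h2 : ((-δ : ℝ) : ℂ) = ((δ : ℝ) : ℂ) :=
      hi (hmem1 _ ⟨le_refl _, by linarith⟩) (hmem1 _ ⟨by linarith, le_refl _⟩) h
    have h3 : (-δ : ℝ) = δ := by exact_mod_cast h2
    linarith
  set y : ℝ := (f (-δ) + f δ) / 2 with hy
  have hymem : y ∈ Set.uIcc (f (-δ)) (f δ) := by
    rcases le_total (f (-δ)) (f δ) with h | h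
    · rw [Set.uIcc_of_le h]; constructor <;> [skip; skip] <;> [simp only [hy]; simp only [hy]] <;> linarith
    · rw [Set.uIcc_of_ge h]; constructor <;> simp only [hy, Set.mem_Icc] <;> linarith
  obtain ⟨s₁, hs₁mem, hs₁⟩ := intermediate_value_uIcc hfc hymem
  have hgend1 : g (-δ) = f (-δ) := by simp only [hg, hf, hc₂negδ]
  have hgend2 : g δ = f δ := by simp only [hg, hf, hc₂δ]
  obtain ⟨s₂, hs₂mem, hs₂⟩ := intermediate_value_uIcc hgc
    (by rw [← hgend1, ← hgend2] at hymem; exact hymem)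
  rw [hIcc] at hs₁mem hs₂mem
  have heqc : (s₁ : ℂ) = c₂ s₂ :=
    hi (hmem1 _ hs₁mem) (hmem2 _ hs₂mem) (hs₁.trans hs₂.symm)
  have him0 : δ - s₂ ^ 2 / δ = 0 := by
    have h := congrArg Complex.im heqc
    rw [Complex.ofReal_im, hcim] at h
    linarith
  have hs₂sq : s₂ ^ 2 = δ ^ 2 := by
    field_simp at him0
    nlinarith [him0]
  have hs₂val : s₂ = δ ∨ s₂ = -δ := by
    have hfac : (s₂ - δ) * (s₂ + δ) = 0 := by linear_combination hs₂sq
    rcases mul_eq_zero.mp hfac with h | h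
    · left; linarith
    · right; linarith
  have hyne1 : y ≠ f δ := by intro h; rw [hy] at h; exact hne (by linarith)
  have hyne2 : y ≠ f (-δ) := by intro h; rw [hy] at h; exact hne (by linarith)
  rcases hs₂val with h | h
  · exact hyne1 (by rw [← hs₂, h, hgend2])
  · exact hyne2 (by rw [← hs₂, h, hgend1])


section Main
variable {X : Type*} [TopologicalSpace X] [AddCommGroup X] [Module ℂ X]
    [IsTopologicalAddGroup X] [ContinuousSMul ℂ X]
    [TopologicalSpace.SeparableSpace X] [TopologicalSpace.MetrizableSpace X]
    (T : ℝ → X →L[ℂ] X)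

/-- visiting times of a hypercyclic vector to a nonempty open set are unbounded -/
lemma visits_unbounded
    (hT0 : T 0 = 1)
    (hTadd : ∀ t s : ℝ, 0 ≤ t → 0 ≤ s → T (t + s) = (T t).comp (T s))
    (hTcont : ∀ y : X, ContinuousOn (fun t : ℝ => T t y) (Set.Ici 0))
    (x : X) (hx : Dense {y : X | ∃ t : ℝ, 0 ≤ t ∧ T t x = y})
    (U : Set X) (hU : IsOpen U) (hUne : U.Nonempty) :
    ∀ B : ℝ, ∃ t, B < t ∧ 0 ≤ t ∧ T t x ∈ U := by
  classical
  letI : MetricSpace X := TopologicalSpace.metrizableSpaceMetric X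
  intro B
  by_cases hX : ∀ v : X, v = 0
  · obtain ⟨u, hu⟩ := hUne
    refine ⟨max B 0 + 1, by have := le_max_left B 0; linarith, by have := le_max_right B 0; linarith, ?_⟩
    have h1 : T (max B 0 + 1) x = u := by rw [hX (T (max B 0 + 1) x), hX u]
    rwa [h1]
  · push_neg at hX
    obtain ⟨v, hv⟩ := hX
    by_contra hcon
    push_neg at hcon
    have hbd : ∀ t, 0 ≤ t → T t x ∈ U → t ≤ B := by
      intro t ht htU
      by_contra h
      push_neg at h
      exact hcon t h ht htU
    set M := max B 0 with hM
    have hM0 : (0:ℝ) ≤ M := le_max_right B 0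
    have hbd' : ∀ t, 0 ≤ t → T t x ∈ U → t ≤ M := fun t ht htU =>
      le_trans (hbd t ht htU) (le_max_left B 0)
    -- injectivity of the orbit map
    have hper_contra : ∀ t₁ t₂ : ℝ, 0 ≤ t₁ → 0 ≤ t₂ → t₁ < t₂ → T t₁ x = T t₂ x → False := by
      intro t₁ t₂ h1 h2 hlt heq
      set p := t₂ - t₁ with hp
      have hppos : 0 < p := by simp only [hp]; linarith
      have hper : ∀ t, t₂ ≤ t → T t x = T (t - p) x := by
        intro t ht
        have e1 : T ((t - t₂) + t₂) = (T (t - t₂)).comp (T t₂) := hTadd _ _ (by linarith) (by linarith)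
        have e2 : T ((t - t₂) + t₁) = (T (t - t₂)).comp (T t₁) := hTadd _ _ (by linarith) (by linarith)
        have ha : (t - t₂) + t₂ = t := by ring
        have hb : (t - t₂) + t₁ = t - p := by simp only [hp]; ring
        rw [ha] at e1; rw [hb] at e2
        rw [e1, e2]
        simp only [ContinuousLinearMap.comp_apply]
        rw [heq]
      have hcov : ∀ n : ℕ, ∀ t, 0 ≤ t → t ≤ t₂ + n * p →
          ∃ t', (0 ≤ t' ∧ t' ≤ t₂) ∧ T t x = T t' x := by
        intro n
        induction n with
        | zero =>
          intro t ht hle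
          exact ⟨t, ⟨ht, by simpa using hle⟩, rfl⟩
        | succ n ih =>
          intro t ht hle
          by_cases htt : t ≤ t₂
          · exact ⟨t, ⟨ht, htt⟩, rfl⟩
          · push_neg at htt
            have hle' : t - p ≤ t₂ + n * p := by
              push_cast at hle ⊢
              linarith
            obtain ⟨t', h1', h2'⟩ := ih (t - p) (by simp only [hp]; linarith) hle'
            exact ⟨t', h1', (hper t htt.le).trans h2'⟩
      have hKc : IsCompact ((fun t => T t x) '' Set.Icc 0 t₂) :=
        isCompact_Icc.image_of_continuousOn ((hTcont x).mono Set.Icc_subset_Ici_self)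
      have horb : {y : X | ∃ t, 0 ≤ t ∧ T t x = y} ⊆ (fun t => T t x) '' Set.Icc 0 t₂ := by
        rintro y ⟨t, ht, rfl⟩
        obtain ⟨n, hn⟩ := exists_nat_ge ((t - t₂) / p)
        have hn' : t ≤ t₂ + n * p := by
          rw [div_le_iff₀ hppos] at hn
          linarith
        obtain ⟨t', ⟨h0', h2'⟩, heq'⟩ := hcov n t ht hn'
        exact ⟨t', ⟨h0', h2'⟩, heq'.symm⟩
      have huniv : (Set.univ : Set X) ⊆ (fun t => T t x) '' Set.Icc 0 t₂ := by
        calc (Set.univ : Set X) = closure {y : X | ∃ t, 0 ≤ t ∧ T t x = y} := hx.closure_eq.symm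
          _ ⊆ closure ((fun t => T t x) '' Set.Icc 0 t₂) := closure_mono horb
          _ = (fun t => T t x) '' Set.Icc 0 t₂ := hKc.isClosed.closure_eq
      haveI : CompactSpace X := isCompact_univ_iff.mp (Set.univ_subset_iff.mp huniv ▸ hKc)
      obtain ⟨w, -, κ, hκ, hconv⟩ :=
        isCompact_univ.tendsto_subseq (x := fun n : ℕ => (n : ℂ) • v) (fun n => Set.mem_univ _)
      have h1 : Tendsto (fun j => ((κ j : ℕ) : ℝ)) atTop atTop :=
        tendsto_natCast_atTop_atTop.comp hκ.tendsto_atTop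
      have h2 : Tendsto (fun j => ((κ j : ℕ) : ℝ)⁻¹) atTop (nhds 0) :=
        tendsto_inv_atTop_zero.comp h1
      have hsc : Tendsto (fun j => ((κ j : ℕ) : ℂ)⁻¹) atTop (nhds 0) := by
        have h3 : Tendsto (fun j => Complex.ofReal (((κ j : ℕ) : ℝ)⁻¹)) atTop
            (nhds (((0:ℝ) : ℂ))) := (Complex.continuous_ofReal.tendsto 0).comp h2
        rw [Complex.ofReal_zero] at h3
        refine h3.congr fun j => ?_
        push_cast; ring
      have hmul : Tendsto (fun j => ((κ j : ℕ) : ℂ)⁻¹ • ((κ j : ℕ) : ℂ) • v) atTop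
          (nhds ((0 : ℂ) • w)) := hsc.smul hconv
      rw [zero_smul] at hmul
      have heqv : ∀ᶠ j in atTop, ((κ j : ℕ) : ℂ)⁻¹ • ((κ j : ℕ) : ℂ) • v = v := by
        filter_upwards [eventually_ge_atTop 1] with j hj
        have hj' : 1 ≤ κ j := le_trans hj (hκ.le_apply)
        have hne0 : κ j ≠ 0 := Nat.one_le_iff_ne_zero.mp hj'
        have : ((κ j : ℕ) : ℂ) ≠ 0 := Nat.cast_ne_zero.mpr hne0
        exact inv_smul_smul₀ this v
      have : Tendsto (fun _ : ℕ => v) atTop (nhds 0) := Tendsto.congr' heqv hmul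
      exact hv (tendsto_nhds_unique
        (tendsto_const_nhds : Tendsto (fun _ : ℕ => v) atTop (nhds v)) this)
    have hinj : ∀ t₁ t₂ : ℝ, 0 ≤ t₁ → 0 ≤ t₂ → T t₁ x = T t₂ x → t₁ = t₂ := by
      intro t₁ t₂ h1 h2 he
      rcases lt_trichotomy t₁ t₂ with h | h | h
      · exact (hper_contra t₁ t₂ h1 h2 h he).elim
      · exact h
      · exact (hper_contra t₂ t₁ h2 h1 h he.symm).elim
    -- Step B: U is contained in the image of [0, M]
    have hUsub : U ⊆ (fun t => T t x) '' Set.Icc 0 M := by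
      intro u hu
      have hucl : u ∈ closure ({y : X | ∃ t, 0 ≤ t ∧ T t x = y} ∩ U) := by
        rw [mem_closure_iff]
        intro O hO hmem
        obtain ⟨z, hz, hzo⟩ := hx.exists_mem_open (hO.inter hU) ⟨u, hmem, hu⟩
        exact ⟨z, hzo.1, hz, hzo.2⟩
      obtain ⟨y, hy, hylim⟩ := mem_closure_iff_seq_limit.mp hucl
      choose tk htk0 htkeq using fun k => (hy k).1
      have htkU : ∀ k, T (tk k) x ∈ U := fun k => by rw [htkeq k]; exact (hy k).2
      have htkM : ∀ k, tk k ∈ Set.Icc (0:ℝ) M := fun k =>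
        ⟨htk0 k, hbd' _ (htk0 k) (htkU k)⟩
      obtain ⟨τ, hτmem, κ, hκ, hκlim⟩ := isCompact_Icc.tendsto_subseq htkM
      have hA : Tendsto (fun j => tk (κ j)) atTop (nhdsWithin τ (Set.Ici 0)) :=
        tendsto_nhdsWithin_of_tendsto_nhds_of_eventually_within _ hκlim
          (Eventually.of_forall fun j => htk0 _)
      have h1 : Tendsto (fun j => T (tk (κ j)) x) atTop (nhds (T τ x)) :=
        ((hTcont x) τ hτmem.1).tendsto.comp hA
      have h2 : Tendsto (fun j => T (tk (κ j)) x) atTop (nhds u) := by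
        have h3 := hylim.comp hκ.tendsto_atTop
        refine h3.congr fun j => ?_
        exact (htkeq (κ j)).symm
      exact ⟨τ, hτmem, tendsto_nhds_unique h1 h2⟩
    -- Step C: build a continuous injection of a disc into ℝ
    set e : Set.Icc (0:ℝ) M → X := fun t => T t.val x with he
    have hecont : Continuous e :=
      continuousOn_iff_continuous_restrict.mp ((hTcont x).mono Set.Icc_subset_Ici_self)
    have heinj : Function.Injective e := by
      intro a b h
      exact Subtype.ext (hinj _ _ a.2.1 b.2.1 h)
    haveI : CompactSpace (Set.Icc (0:ℝ) M) := isCompact_iff_compactSpace.mp isCompact_Icc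
    have hesurj : ∀ z : Set.range e, ∃ a, (⟨e a, Set.mem_range_self a⟩ : Set.range e) = z := by
      rintro ⟨w, a, rfl⟩
      exact ⟨a, rfl⟩
    set E : Set.Icc (0:ℝ) M ≃ Set.range e :=
      Equiv.ofBijective (fun a => ⟨e a, Set.mem_range_self a⟩)
        ⟨fun a b hab => heinj (congrArg Subtype.val hab), hesurj⟩ with hE
    have hEc : Continuous ⇑E := hecont.subtype_mk _
    set H : Set.Icc (0:ℝ) M ≃ₜ Set.range e := Continuous.homeoOfEquivCompactToT2 hEc with hH
    set r : X → ℝ := fun w =>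
      if h : w ∈ Set.range e then ((H.symm ⟨w, h⟩ : Set.Icc (0:ℝ) M) : ℝ) else 0 with hr
    have hrcont : ContinuousOn r (Set.range e) := by
      rw [continuousOn_iff_continuous_restrict]
      have hres : (Set.range e).domRestrict r = fun z => ((H.symm z : Set.Icc (0:ℝ) M) : ℝ) := by
        funext z
        simp only [Set.domRestrict_apply, hr, dif_pos z.2, Subtype.coe_eta]
      rw [hres]
      exact continuous_subtype_val.comp H.symm.continuous
    have hUrange : U ⊆ Set.range e := by
      intro u hu
      obtain ⟨t, ht, hteq⟩ := hUsub hu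
      exact ⟨⟨t, ht⟩, hteq⟩
    obtain ⟨u₀, hu₀⟩ := hUne
    have hFcont : Continuous (fun c : ℂ => u₀ + c • v) := by fun_prop
    have hpre : (fun c : ℂ => u₀ + c • v) ⁻¹' U ∈ nhds (0 : ℂ) := by
      apply hFcont.continuousAt.preimage_mem_nhds
      apply hU.mem_nhds
      simpa using hu₀
    obtain ⟨δ, hδpos, hball⟩ := Metric.nhds_basis_closedBall.mem_iff.mp hpre
    set G : ℂ → ℝ := fun c => r (u₀ + c • v) with hG
    have hmaps : Set.MapsTo (fun c : ℂ => u₀ + c • v) (Metric.closedBall 0 δ) (Set.range e) :=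
      fun c hc => hUrange (hball hc)
    have hGc : ContinuousOn G (Metric.closedBall 0 δ) :=
      hrcont.comp hFcont.continuousOn hmaps
    have hGi : Set.InjOn G (Metric.closedBall 0 δ) := by
      intro c hc c' hc' hGeq
      have h1 : u₀ + c • v ∈ Set.range e := hUrange (hball hc)
      have h2 : u₀ + c' • v ∈ Set.range e := hUrange (hball hc')
      simp only [hG, hr, dif_pos h1, dif_pos h2] at hGeq
      have h3 : H.symm ⟨u₀ + c • v, h1⟩ = H.symm ⟨u₀ + c' • v, h2⟩ :=
        Subtype.ext hGeq
      have h4 : (⟨u₀ + c • v, h1⟩ : Set.range e) = ⟨u₀ + c' • v, h2⟩ :=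
        H.symm.injective h3
      have h5 : u₀ + c • v = u₀ + c' • v := congrArg Subtype.val h4
      have h6 : c • v = c' • v := by
        have := add_left_cancel h5
        exact this
      by_contra hne
      apply hv
      have hcc : c - c' ≠ 0 := sub_ne_zero.mpr hne
      calc v = (c - c')⁻¹ • ((c - c') • v) := (inv_smul_smul₀ hcc v).symm
        _ = (c - c')⁻¹ • (0 : X) := by rw [sub_smul, h6, sub_self]
        _ = 0 := smul_zero _
    exact no_inj_disc hδpos G hGc hGi

end Main

/-- If `𝒯 = (T_t)_{t≥0}` is a `C₀`-semigroup on a separable metrizable topological vector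
space `X` and `x` is a hypercyclic vector for `𝒯`, then for every nonempty open `U ⊆ X`
the set `J_U = {τ > 0 : ∃ n, T_{nτ} x ∈ U}` is open and dense in `(0, ∞)`. -/
theorem stmt3 {X : Type*} [TopologicalSpace X] [AddCommGroup X] [Module ℂ X]
    [IsTopologicalAddGroup X] [ContinuousSMul ℂ X]
    [TopologicalSpace.SeparableSpace X] [TopologicalSpace.MetrizableSpace X]
    (T : ℝ → X →L[ℂ] X)
    (hT0 : T 0 = 1)
    (hTadd : ∀ t s : ℝ, 0 ≤ t → 0 ≤ s → T (t + s) = (T t).comp (T s))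
    (hTcont : ∀ y : X, ContinuousOn (fun t : ℝ => T t y) (Set.Ici 0))
    (x : X) (hx : Dense {y : X | ∃ t : ℝ, 0 ≤ t ∧ T t x = y})
    (U : Set X) (hU : IsOpen U) (hUne : U.Nonempty) :
    IsOpen {τ : ℝ | 0 < τ ∧ ∃ n : ℕ, T ((n : ℝ) * τ) x ∈ U} ∧
      Set.Ioi (0 : ℝ) ⊆ closure {τ : ℝ | 0 < τ ∧ ∃ n : ℕ, T ((n : ℝ) * τ) x ∈ U} := by
  by_cases hxU : x ∈ U
  · have hJ : {τ : ℝ | 0 < τ ∧ ∃ n : ℕ, T ((n : ℝ) * τ) x ∈ U} = Set.Ioi 0 := by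
      ext τ
      simp only [Set.mem_setOf_eq, Set.mem_Ioi]
      refine ⟨fun h => h.1, fun h => ⟨h, 0, ?_⟩⟩
      simpa [hT0] using hxU
    rw [hJ]
    exact ⟨isOpen_Ioi, subset_closure⟩
  · constructor
    · -- openness
      rw [isOpen_iff_mem_nhds]
      rintro τ₀ ⟨hτ₀, n, hn⟩
      have hn0 : n ≠ 0 := by
        rintro rfl
        apply hxU
        simpa [hT0] using hn
      have hnpos : (0:ℝ) < (n : ℝ) * τ₀ := by
        have : (0:ℝ) < (n : ℝ) := by exact_mod_cast Nat.pos_of_ne_zero hn0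
        positivity
      have hφ : ContinuousAt (fun t : ℝ => T t x) ((n : ℝ) * τ₀) :=
        (hTcont x).continuousAt (Ici_mem_nhds hnpos)
      have hmul : ContinuousAt (fun τ : ℝ => (n : ℝ) * τ) τ₀ :=
        (continuous_mul_left ((n : ℝ))).continuousAt
      have hc : ContinuousAt (fun τ : ℝ => T ((n : ℝ) * τ) x) τ₀ := hφ.comp hmul
      have hpre : (fun τ : ℝ => T ((n : ℝ) * τ) x) ⁻¹' U ∈ nhds τ₀ :=
        hc.preimage_mem_nhds (hU.mem_nhds hn)
      have hIoi : Set.Ioi (0:ℝ) ∈ nhds τ₀ := isOpen_Ioi.mem_nhds hτ₀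
      filter_upwards [hpre, hIoi] with τ h1 h2
      exact ⟨h2, n, h1⟩
    · -- density
      intro τ₀ hτ₀
      rw [Set.mem_Ioi] at hτ₀
      rw [Metric.mem_closure_iff]
      intro ε hε
      set m := min (ε / 2) (τ₀ / 2) with hm
      have hmpos : 0 < m := by
        apply lt_min <;> linarith
      set a := τ₀ - m with ha
      set b := τ₀ + m with hb
      have hapos : 0 < a := by
        have : m ≤ τ₀ / 2 := min_le_right _ _
        simp only [ha]; linarith
      have hab : a < b := by simp only [ha, hb]; linarith
      have hbpos : 0 < b := lt_trans hapos hab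
      obtain ⟨t, htB, ht0, htU⟩ := visits_unbounded T hT0 hTadd hTcont x hx U hU hUne
        (max 0 (a * b / (b - a)))
      have htpos : 0 < t := lt_of_le_of_lt (le_max_left _ _) htB
      have htab : a * b / (b - a) < t := lt_of_le_of_lt (le_max_right _ _) htB
      have hba : 0 < b - a := by linarith
      have htab' : a * b < t * (b - a) := by
        rw [div_lt_iff₀ hba] at htab
        linarith
      set n : ℕ := ⌊t / b⌋₊ + 1 with hn
      have hnpos : 0 < n := Nat.succ_pos _
      have hnR : (0:ℝ) < (n:ℝ) := by exact_mod_cast hnpos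
      have h1 : t / b < (n : ℝ) := by
        have := Nat.lt_floor_add_one (t / b)
        push_cast
        simpa [hn] using this
      have h2 : (n : ℝ) ≤ t / b + 1 := by
        have h := Nat.floor_le (show (0:ℝ) ≤ t / b by positivity)
        have h' : (n:ℝ) = (⌊t / b⌋₊ : ℝ) + 1 := by rw [hn]; push_cast; ring
        linarith
      have h3 : t / b + 1 < t / a := by
        rw [div_add' _ _ _ hbpos.ne', div_lt_div_iff₀ hbpos hapos]
        nlinarith
      have hnlt : (n : ℝ) < t / a := lt_of_le_of_lt h2 h3
      set τ := t / n with hτ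
      have hτb : τ < b := by
        rw [hτ, div_lt_iff₀ hnR]
        rw [div_lt_iff₀ hbpos] at h1
        linarith [mul_comm (n:ℝ) b]
      have hτa : a < τ := by
        rw [hτ, lt_div_iff₀ hnR]
        rw [lt_div_iff₀ hapos] at hnlt
        linarith [mul_comm (n:ℝ) a]
      have hτpos : 0 < τ := lt_trans hapos hτa
      refine ⟨τ, ⟨hτpos, n, ?_⟩, ?_⟩
      · have : (n : ℝ) * τ = t := by
          rw [hτ]
          field_simp
        rwa [this]
      · rw [Real.dist_eq, abs_lt]
        have hm2 : m ≤ ε / 2 := min_le_left _ _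
        constructor
        · simp only [ha] at hτa; linarith
        · simp only [hb] at hτb; linarith
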